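/- Let n, k be positive integers and let F be an intersecting family of k-element subsets of [n]. Let ℓ be a positive integer with ℓ ≤ τ(F), where τ(F) is the covering number of F. Then there exists a family G of ℓ-element subsets of [n] with |G| ≤ k^ℓ such that every member of F contains some member of G. -/

import Mathlib

/-- Erdős–Lovász-type inductive construction: if `F` is an intersecting family of
`k`-subsets of `[n]` and `ℓ` is a positive integer with `ℓ ≤ τ(F)` (every cover of `F`
has at least `ℓ` elements), then there is a family `G` of at most `k^ℓ` many `ℓ`-sets
such that every member of `F` contains a member of `G`. -/
theorem stmt_6 (n k ℓ : ℕ) (hn : 0 < n) (hk : 0 < k) (hl : 0 < ℓ)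
    (F : Finset (Finset (Fin n)))
    (hcard : ∀ A ∈ F, A.card = k)
    (hint : ∀ A ∈ F, ∀ B ∈ F, (A ∩ B).Nonempty)
    (hτ : ∀ C : Finset (Fin n), (∀ A ∈ F, (A ∩ C).Nonempty) → ℓ ≤ C.card) :
    ∃ G : Finset (Finset (Fin n)), G.card ≤ k ^ ℓ ∧ (∀ S ∈ G, S.card = ℓ) ∧
      ∀ A ∈ F, ∃ S ∈ G, S ⊆ A := by
  classical
  -- F is nonempty
  have hFne : F.Nonempty := by
    by_contra h
    have : ∀ A ∈ F, (A ∩ (∅ : Finset (Fin n))).Nonempty := by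
      intro A hA
      exact absurd ⟨A, hA⟩ h
    have := hτ ∅ this
    simp at this
    omega
  obtain ⟨A0, hA0⟩ := hFne
  -- inductive construction
  have key : ∀ i : ℕ, 0 < i → i ≤ ℓ →
      ∃ G : Finset (Finset (Fin n)), G.card ≤ k ^ i ∧ (∀ S ∈ G, S.card = i) ∧
        ∀ A ∈ F, ∃ S ∈ G, S ⊆ A := by
    intro i
    induction i with
    | zero => intro h; omega
    | succ i ih =>
      intro _ hile
      rcases Nat.eq_zero_or_pos i with hi0 | hipos
      · -- base case i+1 = 1
        subst hi0
        refine ⟨A0.image (fun x => {x}), ?_, ?_, ?_⟩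
        · calc (A0.image (fun x => ({x} : Finset (Fin n)))).card ≤ A0.card :=
                Finset.card_image_le
            _ = k ^ 1 := by rw [hcard A0 hA0]; ring
        · intro S hS
          obtain ⟨x, _, rfl⟩ := Finset.mem_image.mp hS
          simp
        · intro A hA
          obtain ⟨x, hx⟩ := hint A hA A0 hA0
          rw [Finset.mem_inter] at hx
          exact ⟨{x}, Finset.mem_image_of_mem _ hx.2, by
            simpa using hx.1⟩
      · obtain ⟨G, hGcard, hGsize, hGcov⟩ := ih hipos (le_trans (Nat.le_succ i) hile)
        -- for each S in G there is A_S in F disjoint from S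
        have hch : ∀ S ∈ G, ∃ B, B ∈ F ∧ B ∩ S = ∅ := by
          intro S hS
          by_contra h
          push_neg at h
          have hcov : ∀ A ∈ F, (A ∩ S).Nonempty := by
            intro A hA
            rcases Finset.eq_empty_or_nonempty (A ∩ S) with he | hne
            · exact absurd he (Finset.nonempty_iff_ne_empty.mp (h A hA))
            · exact hne
          have := hτ S hcov
          rw [hGsize S hS] at this
          omega
        choose f hfF hfdisj using hch
        refine ⟨G.attach.biUnion (fun S => (f S.1 S.2).image (fun x => insert x S.1)),
          ?_, ?_, ?_⟩
        · calc (G.attach.biUnion _).card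
              ≤ ∑ S ∈ G.attach, ((f S.1 S.2).image (fun x => insert x S.1)).card :=
                Finset.card_biUnion_le
            _ ≤ ∑ S ∈ G.attach, k := by
                apply Finset.sum_le_sum
                intro S _
                calc ((f S.1 S.2).image (fun x => insert x S.1)).card
                    ≤ (f S.1 S.2).card := Finset.card_image_le
                  _ = k := hcard _ (hfF S.1 S.2)
            _ = G.card * k := by rw [Finset.sum_const, Finset.card_attach, smul_eq_mul]
            _ ≤ k ^ i * k := Nat.mul_le_mul_right k hGcard
            _ = k ^ (i + 1) := (pow_succ k i).symm
        · intro S hS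
          rw [Finset.mem_biUnion] at hS
          obtain ⟨T, _, hT⟩ := hS
          obtain ⟨x, hx, rfl⟩ := Finset.mem_image.mp hT
          have hxT : x ∉ T.1 := by
            intro hxT
            have : x ∈ f T.1 T.2 ∩ T.1 := Finset.mem_inter.mpr ⟨hx, hxT⟩
            rw [hfdisj T.1 T.2] at this
            exact absurd this (Finset.notMem_empty x)
          rw [Finset.card_insert_of_notMem hxT, hGsize T.1 T.2]
        · intro A hA
          obtain ⟨S, hSG, hSA⟩ := hGcov A hA
          obtain ⟨x, hx⟩ := hint A hA (f S hSG) (hfF S hSG)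
          rw [Finset.mem_inter] at hx
          refine ⟨insert x S, ?_, ?_⟩
          · rw [Finset.mem_biUnion]
            exact ⟨⟨S, hSG⟩, Finset.mem_attach _ _,
              Finset.mem_image_of_mem _ hx.2⟩
          · exact Finset.insert_subset hx.1 hSA
  exact key ℓ hl le_rfl
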